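/- arXiv:1508.02366 — 8 statements merged into one kernel-verified Lean document; each statement's English description precedes it below -/
import Mathlib

section
/- Let X be an uncountable separable metric space, k ≥ 1, c ≥ 1, and let χ : [X]^k → {1,...,c} be a coloring of the k-element subsets of X. Then there exists an infinite subset Λ ⊆ X monochromatic for χ (all k-element subsets of Λ receive the same color) and a point r ∈ Λ such that for every ε > 0 there exists r' ∈ Λ with r' ≠ r and d(r', r) < ε. -/
open Set TopologicalSpace

namespace InfMonoAux

/-- Infinite Ramsey theorem for `m`-element subsets of `ℕ`. -/
theorem ramsey {c : ℕ} :
    ∀ (m : ℕ) (f : Finset ℕ → Fin c) (T : Set ℕ), T.Infinite →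
      ∃ S : Set ℕ, S ⊆ T ∧ S.Infinite ∧ ∃ i : Fin c,
        ∀ J : Finset ℕ, ↑J ⊆ S → J.card = m → f J = i := by
  intro m
  induction m with
  | zero =>
      intro f T hT
      refine ⟨T, Subset.rfl, hT, f ∅, fun J hJ hcard => ?_⟩
      rw [Finset.card_eq_zero] at hcard
      subst hcard
      rfl
  | succ m ih =>
      intro f T hT
      have step : ∀ T' : Set ℕ, T'.Infinite →
          ∃ a : ℕ, a ∈ T' ∧ ∃ T'' : Set ℕ, T'' ⊆ T' \ {a} ∧ T''.Infinite ∧ ∃ i : Fin c,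
            ∀ J : Finset ℕ, ↑J ⊆ T'' → J.card = m → f (insert a J) = i := by
        intro T' hT'
        obtain ⟨a, ha⟩ := hT'.nonempty
        obtain ⟨T'', h1, h2, i, hi⟩ := ih (fun J => f (insert a J)) (T' \ {a})
          (hT'.diff (finite_singleton a))
        exact ⟨a, ha, T'', h1, h2, i, hi⟩
      choose af haf Tf hTfsub hTfinf colf hcolf using step
      obtain ⟨W, hW0, hWs⟩ : ∃ W : ℕ → {s : Set ℕ // s.Infinite},
          (W 0).1 = T ∧ ∀ n, (W (n+1)).1 = Tf (W n).1 (W n).2 :=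
        ⟨fun n => Nat.rec ⟨T, hT⟩ (fun _ p => ⟨Tf p.1 p.2, hTfinf p.1 p.2⟩) n, rfl, fun n => rfl⟩
      set A : ℕ → ℕ := fun n => af (W n).1 (W n).2 with hA
      set I : ℕ → Fin c := fun n => colf (W n).1 (W n).2 with hI
      have hWsub : ∀ n, (W (n+1)).1 ⊆ (W n).1 \ {A n} := fun n => by
        rw [hWs n]; exact hTfsub _ _
      have hWmono : ∀ n j, n ≤ j → (W j).1 ⊆ (W n).1 := by
        intro n j hnj
        induction hnj with
        | refl => exact Subset.rfl
        | step _ ih' => exact ((hWsub _).trans diff_subset).trans ih'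
      have hAmem : ∀ n, A n ∈ (W n).1 := fun n => haf _ _
      have hAlater : ∀ n j, n < j → A j ∈ (W (n+1)).1 := fun n j h =>
        hWmono (n+1) j h (hAmem j)
      have hAne : ∀ n j, n < j → A j ≠ A n := by
        intro n j h he
        have h2 := hWsub n (hAlater n j h)
        exact h2.2 (by simp [he])
      have hAinj : Function.Injective A := by
        intro a b hab
        by_contra hne
        rcases lt_trichotomy a b with h | h | h
        · exact hAne a b h hab.symm
        · exact hne h
        · exact hAne b a h hab
      obtain ⟨i0, hi0⟩ := Finite.exists_infinite_fiber I
      have hfib : (I ⁻¹' {i0}).Infinite := Set.infinite_coe_iff.mp hi0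
      refine ⟨A '' (I ⁻¹' {i0}), ?_, hfib.image hAinj.injOn, i0, ?_⟩
      · rintro y ⟨n, _, rfl⟩
        exact hW0 ▸ hWmono 0 n (Nat.zero_le n) (hAmem n)
      · intro J hJ hcard
        set g := Function.invFun A with hg
        have hgA : ∀ n, g (A n) = n := fun n => Function.leftInverse_invFun hAinj n
        have hbackJ : ∀ y ∈ J, A (g y) = y ∧ I (g y) = i0 := by
          intro y hy
          obtain ⟨n, hn, rfl⟩ := hJ hy
          rw [hgA n]
          exact ⟨rfl, hn⟩
        set K : Finset ℕ := J.image g with hK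
        have hKA : K.image A = J := by
          ext y
          simp only [hK, Finset.mem_image]
          constructor
          · rintro ⟨n, ⟨z, hz, rfl⟩, rfl⟩
            rw [(hbackJ z hz).1]; exact hz
          · intro hy; exact ⟨g y, ⟨y, hy, rfl⟩, (hbackJ y hy).1⟩
        have hKcard : K.card = m + 1 := by
          rw [hK, Finset.card_image_of_injOn, hcard]
          intro a ha b hb hab
          rw [← (hbackJ a ha).1, ← (hbackJ b hb).1, hab]
        have hKne : K.Nonempty := Finset.card_pos.mp (by omega)
        have hn0K : K.min' hKne ∈ K := K.min'_mem hKne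
        set n0 := K.min' hKne with hn0
        have hIn0 : I n0 = i0 := by
          obtain ⟨y, hy, he⟩ := Finset.mem_image.mp (hK ▸ hn0K)
          rw [← he]; exact (hbackJ y hy).2
        have hJeq : J = insert (A n0) ((K.erase n0).image A) := by
          rw [← hKA]
          conv_lhs => rw [← Finset.insert_erase hn0K]
          rw [Finset.image_insert]
        have hsub' : ↑((K.erase n0).image A) ⊆ (W (n0+1)).1 := by
          intro y hy
          rw [Finset.coe_image] at hy
          obtain ⟨j, hjK, rfl⟩ := hy
          have hjK' : j ∈ K := Finset.mem_of_mem_erase hjK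
          have hjne : j ≠ n0 := Finset.ne_of_mem_erase hjK
          have hlt : n0 < j := lt_of_le_of_ne (K.min'_le j hjK') (Ne.symm hjne)
          exact hAlater n0 j hlt
        have hcard' : ((K.erase n0).image A).card = m := by
          rw [Finset.card_image_of_injOn hAinj.injOn,
            Finset.card_erase_of_mem hn0K, hKcard]
          omega
        have h1 : ↑((K.erase n0).image A) ⊆ Tf (W n0).1 (W n0).2 := by
          rw [← hWs n0]; exact hsub'
        rw [hJeq, hcolf (W n0).1 (W n0).2 _ h1 hcard']
        exact hIn0

section Construction

variable {X : Type*} [MetricSpace X] [Nonempty X] [DecidableEq X]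

noncomputable def pt (A : Set X) : X :=
  @dite _ A.Nonempty (Classical.propDecidable _) (fun h => h.choose)
    (fun _ => Classical.arbitrary X)

lemma pt_mem {A : Set X} (h : A.Nonempty) : pt A ∈ A := by
  rw [pt, dif_pos h]; exact h.choose_spec

variable (k c : ℕ) (χ : Finset X → Fin c) (V : ℕ → Set X)

/-- The pattern of a point over a finite set: colors of `(k-1)`-subsets together
with the point. -/
noncomputable def pat (F : Finset X) (y : X) :
    {s : Finset X // s ∈ Finset.powersetCard (k-1) F} → Fin c :=
  fun s => χ (insert y s.1)

/-- A refinement piece: points of `A` in the `i`-th basic set, outside `F`, with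
pattern `q` over `F`. -/
def childQ (A : Set X) (F : Finset X) (i : ℕ)
    (q : {s : Finset X // s ∈ Finset.powersetCard (k-1) F} → Fin c) : Set X :=
  {z | z ∈ A ∧ z ∈ V i ∧ z ∉ (F : Set X) ∧ pat k c χ F z = q}

noncomputable def newF (p : Set X × Finset X) : Finset X := insert (pt p.1) p.2

def children (p : Set X × Finset X) : Set (Set X × Finset X) :=
  ⋃ i : ℕ, Set.range
    (fun q : ({s : Finset X // s ∈ Finset.powersetCard (k-1) (newF p)} → Fin c) =>
      (childQ k c χ V p.1 (newF p) i q, newF p))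

noncomputable def levels : ℕ → Set (Set X × Finset X)
  | 0 => {(Set.univ, ∅)}
  | n + 1 => ⋃ p ∈ levels n, children k c χ V p

noncomputable def D : Set X := ⋃ n, ⋃ p ∈ levels k c χ V n, {pt p.1}

def lost (p : Set X × Finset X) (n : ℕ) : Set X :=
  {z | z ∈ p.1 ∧ z ∉ ((newF p : Finset X) : Set X) ∧ ∀ i : ℕ, z ∈ V i →
    V i ⊆ Metric.ball z ((1/2 : ℝ)^n) →
    (childQ k c χ V p.1 (newF p) i (pat k c χ (newF p) z)).Countable}

noncomputable def G : Set X :=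
  D k c χ V ∪ ⋃ n, ⋃ p ∈ levels k c χ V n, lost k c χ V p n

lemma countable_children (p : Set X × Finset X) : (children k c χ V p).Countable :=
  countable_iUnion fun _ => countable_range _

lemma countable_levels : ∀ n, (levels k c χ V n).Countable
  | 0 => countable_singleton _
  | n + 1 => (countable_levels n).biUnion fun p _ => countable_children k c χ V p

lemma countable_D : (D k c χ V).Countable :=
  countable_iUnion fun n =>
    (countable_levels k c χ V n).biUnion fun _ _ => countable_singleton _

lemma countable_lost
    (hV : ∀ (x : X) (ε : ℝ), 0 < ε → ∃ i, x ∈ V i ∧ V i ⊆ Metric.ball x ε)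
    (p : Set X × Finset X) (n : ℕ) : (lost k c χ V p n).Countable := by
  have hsub : lost k c χ V p n ⊆ ⋃ i : ℕ,
      ⋃ q : ({s : Finset X // s ∈ Finset.powersetCard (k-1) (newF p)} → Fin c),
      {z | z ∈ childQ k c χ V p.1 (newF p) i q ∧
        (childQ k c χ V p.1 (newF p) i q).Countable} := by
    intro z hz
    obtain ⟨hz1, hz2, hz3⟩ := hz
    obtain ⟨i, hzi, hsub⟩ := hV z ((1/2)^n) (by positivity)
    refine mem_iUnion.mpr ⟨i, mem_iUnion.mpr ⟨pat k c χ (newF p) z, ?_, hz3 i hzi hsub⟩⟩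
    exact ⟨hz1, hzi, hz2, rfl⟩
  refine Set.Countable.mono hsub
    (countable_iUnion fun i => countable_iUnion fun q => ?_)
  by_cases h : (childQ k c χ V p.1 (newF p) i q).Countable
  · exact h.mono fun z hz => hz.1
  · have : {z | z ∈ childQ k c χ V p.1 (newF p) i q ∧
        (childQ k c χ V p.1 (newF p) i q).Countable} = ∅ := by
      ext z
      simp only [mem_setOf_eq, mem_empty_iff_false, iff_false, not_and]
      exact fun _ => h
    rw [this]; exact countable_empty

lemma countable_G
    (hV : ∀ (x : X) (ε : ℝ), 0 < ε → ∃ i, x ∈ V i ∧ V i ⊆ Metric.ball x ε) :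
    (G k c χ V).Countable :=
  (countable_D k c χ V).union
    (countable_iUnion fun n =>
      (countable_levels k c χ V n).biUnion fun p _ => countable_lost k c χ V hV p n)

lemma pt_mem_D {n : ℕ} {p : Set X × Finset X} (hp : p ∈ levels k c χ V n) :
    pt p.1 ∈ D k c χ V :=
  mem_iUnion.mpr ⟨n, mem_biUnion hp rfl⟩

/-- Invariant along the branch through `r`. -/
def Qinv (r : X) (n : ℕ) (p : Set X × Finset X) : Prop :=
  p ∈ levels k c χ V n ∧ ¬ p.1.Countable ∧ r ∈ p.1 ∧ ↑p.2 ⊆ D k c χ V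

lemma step_ex (r : X) (hr : r ∉ G k c χ V) (n : ℕ) (p : Set X × Finset X)
    (hp : Qinv k c χ V r n p) :
    ∃ A' : Set X, Qinv k c χ V r (n+1) (A', newF p) ∧ A' ⊆ p.1 ∧
      A' ⊆ Metric.ball r ((1/2 : ℝ)^n) ∧
      (∀ z ∈ A', z ∉ ((newF p : Finset X) : Set X)) ∧
      (∀ z ∈ A', ∀ s : Finset X, s ⊆ newF p → s.card = k - 1 →
        χ (insert z s) = χ (insert r s)) := by
  obtain ⟨hplev, hpunc, hrp, hpD⟩ := hp
  have hrD : r ∉ D k c χ V := fun h => hr (Or.inl h)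
  have hptD : pt p.1 ∈ D k c χ V := pt_mem_D k c χ V hplev
  have hnewFD : ((newF p : Finset X) : Set X) ⊆ D k c χ V := by
    intro z hz
    rw [newF, Finset.coe_insert] at hz
    rcases hz with h | h
    · exact h ▸ hptD
    · exact hpD h
  have hrF : r ∉ ((newF p : Finset X) : Set X) := fun h => hrD (hnewFD h)
  have hrlost : r ∉ lost k c χ V p n := fun h =>
    hr (Or.inr (mem_iUnion.mpr ⟨n, mem_biUnion hplev h⟩))
  have hex : ∃ i, r ∈ V i ∧ V i ⊆ Metric.ball r ((1/2 : ℝ)^n) ∧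
      ¬ (childQ k c χ V p.1 (newF p) i (pat k c χ (newF p) r)).Countable := by
    by_contra h
    push_neg at h
    exact hrlost ⟨hrp, hrF, fun i hi hsub => h i hi hsub⟩
  obtain ⟨i, hri, hVsub, hunc⟩ := hex
  refine ⟨childQ k c χ V p.1 (newF p) i (pat k c χ (newF p) r),
    ⟨?_, hunc, ⟨hrp, hri, hrF, rfl⟩, hnewFD⟩, fun z hz => hz.1,
    fun z hz => hVsub hz.2.1, fun z hz => hz.2.2.1, ?_⟩
  · show _ ∈ levels k c χ V (n+1)
    rw [levels]
    exact mem_biUnion hplev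
      (mem_iUnion.mpr ⟨i, mem_range.mpr ⟨pat k c χ (newF p) r, rfl⟩⟩)
  · intro z hz s hs hcard
    have hq := hz.2.2.2
    have hsmem : s ∈ Finset.powersetCard (k-1) (newF p) :=
      Finset.mem_powersetCard.mpr ⟨hs, hcard⟩
    have := congrFun hq ⟨s, hsmem⟩
    simpa [pat] using this

end Construction

end InfMonoAux

open InfMonoAux Set in
/-- In an uncountable separable metric space, every coloring of the
k-element subsets with c colors admits an infinite monochromatic set containing
one of its limit points. -/
theorem infinite_monochromatic_with_limit_point
    (X : Type*) [MetricSpace X] [Uncountable X] [TopologicalSpace.SeparableSpace X]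
    (k c : ℕ) (hk : 1 ≤ k) (hc : 1 ≤ c) (χ : Finset X → Fin c) :
    ∃ Λ : Set X, Λ.Infinite ∧
      (∃ i : Fin c, ∀ s : Finset X, ↑s ⊆ Λ → s.card = k → χ s = i) ∧
      ∃ r ∈ Λ, ∀ ε : ℝ, 0 < ε → ∃ r' ∈ Λ, r' ≠ r ∧ dist r' r < ε := by
  classical
  have hsc : SecondCountableTopology X := UniformSpace.secondCountable_of_separable X
  obtain ⟨B, hBc, hBne, hBbasis⟩ := TopologicalSpace.exists_countable_basis X
  have hBne' : B.Nonempty := by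
    have hx : (Classical.arbitrary X) ∈ ⋃₀ B := by
      rw [hBbasis.sUnion_eq]; exact mem_univ _
    obtain ⟨U, hU, _⟩ := hx
    exact ⟨U, hU⟩
  obtain ⟨V, hVeq⟩ := hBc.exists_eq_range hBne'
  have hV : ∀ (x : X) (ε : ℝ), 0 < ε → ∃ i, x ∈ V i ∧ V i ⊆ Metric.ball x ε := by
    intro x ε hε
    obtain ⟨U, hU, hxU, hUsub⟩ :=
      hBbasis.exists_subset_of_mem_open (Metric.mem_ball_self hε) Metric.isOpen_ball
    rw [hVeq] at hU
    obtain ⟨i, rfl⟩ := hU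
    exact ⟨i, hxU, hUsub⟩
  -- pick a point outside the countable "bad" set
  obtain ⟨r, hr⟩ : ∃ r : X, r ∉ G k c χ V := by
    by_contra h
    push_neg at h
    have : (univ : Set X).Countable :=
      (countable_G k c χ V hV).mono fun z _ => h z
    exact not_countable_univ this
  have hrD : r ∉ D k c χ V := fun h => hr (Or.inl h)
  have hQ0 : Qinv k c χ V r 0 ((Set.univ : Set X), (∅ : Finset X)) := by
    refine ⟨?_, not_countable_univ, mem_univ r, by simp⟩
    rw [levels]; exact rfl
  choose fA hfA using step_ex k c χ V r hr
  obtain ⟨b, hb0, hbs⟩ : ∃ b : (n : ℕ) → {p : Set X × Finset X // Qinv k c χ V r n p},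
      (b 0).1 = ((Set.univ : Set X), (∅ : Finset X)) ∧
      ∀ n, (b (n+1)).1 = (fA n (b n).1 (b n).2, newF (b n).1) :=
    ⟨fun n => Nat.rec ⟨((Set.univ : Set X), (∅ : Finset X)), hQ0⟩
      (fun n p => ⟨(fA n p.1 p.2, newF p.1), (hfA n p.1 p.2).1⟩) n, rfl, fun n => rfl⟩
  have hbQ : ∀ n, Qinv k c χ V r n (b n).1 := fun n => (b n).2
  have hbF : ∀ n, ((b (n+1)).1).2 = newF (b n).1 := fun n => by rw [hbs n]
  have key : ∀ n, ((b (n+1)).1).1 ⊆ ((b n).1).1 ∧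
      ((b (n+1)).1).1 ⊆ Metric.ball r ((1/2 : ℝ)^n) ∧
      (∀ z ∈ ((b (n+1)).1).1, z ∉ ((newF (b n).1 : Finset X) : Set X)) ∧
      (∀ z ∈ ((b (n+1)).1).1, ∀ s : Finset X, s ⊆ newF (b n).1 → s.card = k - 1 →
        χ (insert z s) = χ (insert r s)) := by
    intro n
    have h := hfA n (b n).1 (b n).2
    rw [hbs n]
    exact ⟨h.2.1, h.2.2.1, h.2.2.2.1, h.2.2.2.2⟩
  set x : ℕ → X := fun n => pt ((b n).1).1 with hxdef
  have hxmem : ∀ n, x n ∈ ((b n).1).1 := by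
    intro n
    apply pt_mem
    rcases eq_empty_or_nonempty ((b n).1).1 with h | h
    · exact absurd (h ▸ countable_empty) (hbQ n).2.1
    · exact h
  have hxD : ∀ n, x n ∈ D k c χ V := fun n => pt_mem_D k c χ V (hbQ n).1
  have hxr : ∀ n, x n ≠ r := fun n h => hrD (h ▸ hxD n)
  have hFx : ∀ n, x n ∈ ((b (n+1)).1).2 := by
    intro n
    rw [hbF n, newF]
    exact Finset.mem_insert_self _ _
  have hFmono : ∀ m n, m ≤ n → ((b m).1).2 ⊆ ((b n).1).2 := by
    intro m n hmn
    induction hmn with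
    | refl => exact Finset.Subset.refl _
    | step _ ih' =>
        refine ih'.trans ?_
        rw [hbF]
        exact Finset.subset_insert _ _
  have hxF : ∀ m n, m < n → x m ∈ ((b n).1).2 := fun m n h =>
    hFmono (m+1) n h (hFx m)
  have hxnotF : ∀ n, x (n+1) ∉ ((b (n+1)).1).2 := by
    intro n h
    refine (key n).2.2.1 (x (n+1)) (hxmem (n+1)) ?_
    rw [← hbF n]
    exact Finset.mem_coe.mpr h
  have hxinj : Function.Injective x := by
    have hne : ∀ m n, m < n → x n ≠ x m := by
      intro m n h he
      obtain ⟨n', rfl⟩ : ∃ n', n = n' + 1 := ⟨n - 1, by omega⟩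
      exact hxnotF n' (he ▸ hxF m (n'+1) h)
    intro a b' hab
    by_contra hne'
    rcases lt_trichotomy a b' with h | h | h
    · exact hne a b' h hab.symm
    · exact hne' h
    · exact hne b' a h hab
  have hdist : ∀ n, dist (x (n+1)) r < (1/2 : ℝ)^n := by
    intro n
    have := (key n).2.1 (hxmem (n+1))
    rwa [Metric.mem_ball] at this
  have hmatch : ∀ n, ∀ s : Finset X, s ⊆ ((b (n+1)).1).2 → s.card = k - 1 →
      χ (insert (x (n+1)) s) = χ (insert r s) := by
    intro n s hs hcard
    refine (key n).2.2.2 (x (n+1)) (hxmem (n+1)) s ?_ hcard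
    rwa [← hbF n]
  -- Ramsey on the end-coloring
  obtain ⟨S, hST, hSinf, i0, hS⟩ := InfMonoAux.ramsey (k-1)
    (fun J => χ (insert r (J.image x))) (Set.Ici 1) (Set.Ici_infinite 1)
  -- indexing lemma
  have indexing : ∀ t : Finset X, ↑t ⊆ x '' S →
      ∃ J : Finset ℕ, ↑J ⊆ S ∧ J.image x = t ∧ J.card = t.card := by
    intro t ht
    set g := Function.invFun x with hg
    have hgx : ∀ n, g (x n) = n := fun n => Function.leftInverse_invFun hxinj n
    have hback : ∀ y ∈ t, x (g y) = y ∧ g y ∈ S := by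
      intro y hy
      obtain ⟨n, hnS, rfl⟩ := ht hy
      rw [hgx]
      exact ⟨rfl, hnS⟩
    refine ⟨t.image g, ?_, ?_, ?_⟩
    · intro j hj
      rw [Finset.coe_image] at hj
      obtain ⟨y, hy, rfl⟩ := hj
      exact (hback y hy).2
    · ext y
      simp only [Finset.mem_image]
      constructor
      · rintro ⟨j, ⟨z, hz, rfl⟩, rfl⟩
        rw [(hback z hz).1]; exact hz
      · intro hy
        exact ⟨g y, ⟨y, hy, rfl⟩, (hback y hy).1⟩
    · rw [Finset.card_image_of_injOn]
      intro a ha b' hb' hab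
      rw [← (hback a ha).1, ← (hback b' hb').1, hab]
  refine ⟨insert r (x '' S), ?_, ⟨i0, ?_⟩, r, mem_insert _ _, ?_⟩
  · exact ((hSinf.image hxinj.injOn).mono (subset_insert r _))
  · -- monochromaticity
    intro e he hecard
    by_cases hre : r ∈ e
    · have ht : ↑(e.erase r) ⊆ x '' S := by
        intro y hy
        rw [Finset.coe_erase] at hy
        have := he hy.1
        rcases this with h | h
        · exact absurd h hy.2
        · exact h
      obtain ⟨J, hJS, hJim, hJcard⟩ := indexing (e.erase r) ht
      have htcard : (e.erase r).card = k - 1 := by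
        rw [Finset.card_erase_of_mem hre, hecard]
      have := hS J hJS (by rw [hJcard, htcard])
      rw [hJim] at this
      rwa [Finset.insert_erase hre] at this
    · have he' : ↑e ⊆ x '' S := by
        intro y hy
        rcases he hy with h | h
        · exact absurd (h ▸ hy) (by simpa using hre)
        · exact h
      obtain ⟨J, hJS, hJim, hJcard⟩ := indexing e he'
      have hJne : J.Nonempty := Finset.card_pos.mp (by rw [hJcard, hecard]; omega)
      have hmJ : J.max' hJne ∈ J := J.max'_mem hJne
      have hm1 : 1 ≤ J.max' hJne := hST (hJS hmJ)
      have he2 : e = insert (x (J.max' hJne)) ((J.erase (J.max' hJne)).image x) := by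
        conv_lhs => rw [← hJim, ← Finset.insert_erase hmJ]
        rw [Finset.image_insert]
      have hscard : ((J.erase (J.max' hJne)).image x).card = k - 1 := by
        rw [Finset.card_image_of_injOn hxinj.injOn,
          Finset.card_erase_of_mem hmJ, hJcard, hecard]
      have hssub : (J.erase (J.max' hJne)).image x ⊆ ((b (J.max' hJne)).1).2 := by
        intro y hy
        obtain ⟨j, hj, rfl⟩ := Finset.mem_image.mp hy
        have hjJ := Finset.mem_of_mem_erase hj
        have hlt : j < J.max' hJne :=
          lt_of_le_of_ne (J.le_max' j hjJ) (Finset.ne_of_mem_erase hj)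
        exact hxF j _ hlt
      obtain ⟨m', hm'⟩ : ∃ m', J.max' hJne = m' + 1 := ⟨J.max' hJne - 1, by omega⟩
      rw [hm'] at hmJ hssub hscard he2
      rw [he2, hmatch m' _ hssub hscard]
      exact hS (J.erase (m'+1)) (fun j hj => hJS (Finset.mem_of_mem_erase hj))
        (by rw [Finset.card_erase_of_mem hmJ, hJcard, hecard])
  · -- limit point
    intro ε hε
    obtain ⟨N, hN⟩ : ∃ N : ℕ, (1/2 : ℝ)^N < ε :=
      exists_pow_lt_of_lt_one hε (by norm_num)
    obtain ⟨n, hnS, hn⟩ := hSinf.exists_gt N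
    refine ⟨x n, mem_insert_iff.mpr (Or.inr ⟨n, hnS, rfl⟩), hxr n, ?_⟩
    have hn1 : 1 ≤ n := hST hnS
    obtain ⟨n', rfl⟩ : ∃ n', n = n' + 1 := ⟨n - 1, by omega⟩
    calc dist (x (n'+1)) r < (1/2 : ℝ)^n' := hdist n'
      _ ≤ (1/2 : ℝ)^N := by
          apply pow_le_pow_of_le_one (by norm_num) (by norm_num)
          omega
      _ < ε := hN
end

section
/- Define χ on 3-element subsets {x₁, x₂, x₃} of ℝ with x₁ < x₂ < x₃ by χ = 0 if |x₁ - x₂| ≤ |x₂ - x₃| and χ = 1 otherwise. Then no subset Λ ⊆ ℝ that is monochromatic for χ has two distinct limit points. -/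
private lemma mono_pair_near (Λ : Set ℝ) (l : ℝ)
    (h : ∀ ε : ℝ, 0 < ε → ∃ y ∈ Λ, y ≠ l ∧ |y - l| < ε)
    (ε : ℝ) (hε : 0 < ε) :
    ∃ a ∈ Λ, ∃ b ∈ Λ, a < b ∧ |a - l| < ε ∧ |b - l| < ε := by
  obtain ⟨y, hyΛ, hy, hyε⟩ := h ε hε
  have hpos : 0 < min ε |y - l| := lt_min hε (abs_pos.mpr (sub_ne_zero.mpr hy))
  obtain ⟨z, hzΛ, hz, hzε⟩ := h _ hpos
  have hzε' : |z - l| < ε := lt_of_lt_of_le hzε (min_le_left _ _)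
  have hne : z ≠ y := by
    intro hzy
    exact absurd (lt_of_lt_of_le hzε (min_le_right _ _)) (by rw [hzy]; exact lt_irrefl _)
  rcases lt_or_gt_of_ne hne with hlt | hlt
  · exact ⟨z, hzΛ, y, hyΛ, hlt, hzε', hyε⟩
  · exact ⟨y, hyΛ, z, hzΛ, hlt, hyε, hzε'⟩

private lemma mono_lt_contra
    (χ : Finset ℝ → ℕ)
    (hχ : ∀ x₁ x₂ x₃ : ℝ, x₁ < x₂ → x₂ < x₃ →
      χ {x₁, x₂, x₃} = if |x₁ - x₂| ≤ |x₂ - x₃| then 0 else 1)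
    (Λ : Set ℝ) (i : ℕ)
    (hmono : ∀ s : Finset ℝ, ↑s ⊆ Λ → s.card = 3 → χ s = i)
    (l₁ l₂ : ℝ) (hlt : l₁ < l₂)
    (h₁ : ∀ ε : ℝ, 0 < ε → ∃ y ∈ Λ, y ≠ l₁ ∧ |y - l₁| < ε)
    (h₂ : ∀ ε : ℝ, 0 < ε → ∃ y ∈ Λ, y ≠ l₂ ∧ |y - l₂| < ε) :
    False := by
  set d := l₂ - l₁ with hd
  have hdpos : 0 < d := sub_pos.mpr hlt
  have hε : 0 < d / 4 := by linarith
  -- triple with two points near l₁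
  obtain ⟨a, haΛ, b, hbΛ, hab, haε, hbε⟩ := mono_pair_near Λ l₁ h₁ (d / 4) hε
  obtain ⟨c, hcΛ, _, hcε⟩ := h₂ (d / 4) hε
  rw [abs_lt] at haε hbε hcε
  have hbc : b < c := by linarith
  have key1 : χ {a, b, c} = 0 := by
    rw [hχ a b c hab hbc]
    rw [if_pos]
    have e1 : |a - b| = b - a := by rw [abs_sub_comm]; exact abs_of_nonneg (by linarith)
    have e2 : |b - c| = c - b := by rw [abs_sub_comm]; exact abs_of_nonneg (by linarith)
    rw [e1, e2]; linarith
  -- triple with two points near l₂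
  obtain ⟨b', hb'Λ, c', hc'Λ, hb'c', hb'ε, hc'ε⟩ := mono_pair_near Λ l₂ h₂ (d / 4) hε
  obtain ⟨a', ha'Λ, _, ha'ε⟩ := h₁ (d / 4) hε
  rw [abs_lt] at hb'ε hc'ε ha'ε
  have ha'b' : a' < b' := by linarith
  have key2 : χ {a', b', c'} = 1 := by
    rw [hχ a' b' c' ha'b' hb'c']
    rw [if_neg]
    have e1 : |a' - b'| = b' - a' := by rw [abs_sub_comm]; exact abs_of_nonneg (by linarith)
    have e2 : |b' - c'| = c' - b' := by rw [abs_sub_comm]; exact abs_of_nonneg (by linarith)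
    rw [e1, e2]; intro h; linarith
  have card1 : ({a, b, c} : Finset ℝ).card = 3 :=
    Finset.card_eq_three.mpr ⟨a, b, c, ne_of_lt hab, ne_of_lt (hab.trans hbc), ne_of_lt hbc, rfl⟩
  have card2 : ({a', b', c'} : Finset ℝ).card = 3 :=
    Finset.card_eq_three.mpr ⟨a', b', c', ne_of_lt ha'b', ne_of_lt (ha'b'.trans hb'c'),
      ne_of_lt hb'c', rfl⟩
  have sub1 : ↑({a, b, c} : Finset ℝ) ⊆ Λ := by
    intro x hx
    simp only [Finset.coe_insert, Finset.coe_singleton, Set.mem_insert_iff,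
      Set.mem_singleton_iff] at hx
    rcases hx with rfl | rfl | rfl <;> assumption
  have sub2 : ↑({a', b', c'} : Finset ℝ) ⊆ Λ := by
    intro x hx
    simp only [Finset.coe_insert, Finset.coe_singleton, Set.mem_insert_iff,
      Set.mem_singleton_iff] at hx
    rcases hx with rfl | rfl | rfl <;> assumption
  have e1 := hmono _ sub1 card1
  have e2 := hmono _ sub2 card2
  rw [key1] at e1
  rw [key2] at e2
  omega

/-- for the min-distance coloring of triples of reals, a monochromatic
set has at most one limit point. -/
theorem monochromatic_at_most_one_limit_point
    (χ : Finset ℝ → ℕ)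
    (hχ : ∀ x₁ x₂ x₃ : ℝ, x₁ < x₂ → x₂ < x₃ →
      χ {x₁, x₂, x₃} = if |x₁ - x₂| ≤ |x₂ - x₃| then 0 else 1)
    (Λ : Set ℝ)
    (hmono : ∃ i : ℕ, ∀ s : Finset ℝ, ↑s ⊆ Λ → s.card = 3 → χ s = i)
    (l₁ l₂ : ℝ)
    (h₁ : ∀ ε : ℝ, 0 < ε → ∃ y ∈ Λ, y ≠ l₁ ∧ |y - l₁| < ε)
    (h₂ : ∀ ε : ℝ, 0 < ε → ∃ y ∈ Λ, y ≠ l₂ ∧ |y - l₂| < ε) :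
    l₁ = l₂ := by
  obtain ⟨i, hi⟩ := hmono
  rcases lt_trichotomy l₁ l₂ with h | h | h
  · exact absurd (mono_lt_contra χ hχ Λ i hi l₁ l₂ h h₁ h₂) not_false
  · exact h
  · exact absurd (mono_lt_contra χ hχ Λ i hi l₂ l₁ h h₂ h₁) not_false
end

section
/- Let (Ψ_n)_{n∈ℕ} be an enumeration (bijection ℕ → ℚ) of the rationals, inducing the well-order Ψ_i ≼ Ψ_j iff i ≤ j. If Λ ⊆ ℚ is an infinite set containing one of its limit points, then there exist r₁, r₂, r₃ ∈ Λ with r₁ < r₂ < r₃ (in the usual order of ℚ), r₁ ≼ r₂, and r₃ ≼ r₂. -/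
private lemma aux_right (Ψ : ℕ ≃ ℚ) (Λ : Set ℚ) (r b : ℚ) (hb : r < b)
    (h : ∀ ε : ℚ, 0 < ε → ∃ y ∈ Λ, r < y ∧ y < r + ε) (N : ℕ) :
    ∃ y ∈ Λ, r < y ∧ y < b ∧ N ≤ Ψ.symm y := by
  classical
  set F : Finset ℚ := ((Finset.range (N+1)).image Ψ).filter (fun q => r < q) with hF
  set G : Finset ℚ := insert (b - r) (F.image (fun q => q - r)) with hG
  have hGne : G.Nonempty := ⟨b - r, Finset.mem_insert_self _ _⟩
  set ε := G.min' hGne with hε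
  have hεmem := G.min'_mem hGne
  have hεpos : 0 < ε := by
    rw [hε] at *
    rcases Finset.mem_insert.mp hεmem with h1 | h1
    · linarith [h1 ▸ (sub_pos.mpr hb)]
    · rcases Finset.mem_image.mp h1 with ⟨q, hq, hq2⟩
      have := (Finset.mem_filter.mp hq).2
      linarith [hq2 ▸ sub_pos.mpr this]
  obtain ⟨y, hyΛ, hry, hyε⟩ := h ε hεpos
  have hεb : ε ≤ b - r := Finset.min'_le _ _ (Finset.mem_insert_self _ _)
  refine ⟨y, hyΛ, hry, by linarith, ?_⟩
  by_contra hN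
  push_neg at hN
  have hyF : y ∈ F := by
    refine Finset.mem_filter.mpr ⟨Finset.mem_image.mpr ⟨Ψ.symm y, ?_, by simp⟩, hry⟩
    exact Finset.mem_range.mpr (by omega)
  have : ε ≤ y - r := Finset.min'_le _ _ (Finset.mem_insert_of_mem (Finset.mem_image_of_mem _ hyF))
  linarith

private lemma aux_left (Ψ : ℕ ≃ ℚ) (Λ : Set ℚ) (r b : ℚ) (hb : b < r)
    (h : ∀ ε : ℚ, 0 < ε → ∃ y ∈ Λ, y < r ∧ r - ε < y) (N : ℕ) :
    ∃ y ∈ Λ, y < r ∧ b < y ∧ N ≤ Ψ.symm y := by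
  classical
  set F : Finset ℚ := ((Finset.range (N+1)).image Ψ).filter (fun q => q < r) with hF
  set G : Finset ℚ := insert (r - b) (F.image (fun q => r - q)) with hG
  have hGne : G.Nonempty := ⟨r - b, Finset.mem_insert_self _ _⟩
  set ε := G.min' hGne with hε
  have hεmem := G.min'_mem hGne
  have hεpos : 0 < ε := by
    rw [hε] at *
    rcases Finset.mem_insert.mp hεmem with h1 | h1
    · linarith [h1 ▸ (sub_pos.mpr hb)]
    · rcases Finset.mem_image.mp h1 with ⟨q, hq, hq2⟩
      have := (Finset.mem_filter.mp hq).2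
      linarith [hq2 ▸ sub_pos.mpr this]
  obtain ⟨y, hyΛ, hry, hyε⟩ := h ε hεpos
  have hεb : ε ≤ r - b := Finset.min'_le _ _ (Finset.mem_insert_self _ _)
  refine ⟨y, hyΛ, hry, by linarith, ?_⟩
  by_contra hN
  push_neg at hN
  have hyF : y ∈ F := by
    refine Finset.mem_filter.mpr ⟨Finset.mem_image.mpr ⟨Ψ.symm y, ?_, by simp⟩, hry⟩
    exact Finset.mem_range.mpr (by omega)
  have : ε ≤ r - y := Finset.min'_le _ _ (Finset.mem_insert_of_mem (Finset.mem_image_of_mem _ hyF))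
  linarith

/-- if an infinite set of rationals contains one of its limit points,
then it contains r₁ < r₂ < r₃ with r₁ ≼ r₂ and r₃ ≼ r₂ in the enumeration order. -/
theorem special_triple_exists
    (Ψ : ℕ ≃ ℚ) (Λ : Set ℚ) (hinf : Λ.Infinite)
    (r : ℚ) (hr : r ∈ Λ)
    (hlim : ∀ ε : ℚ, 0 < ε → ∃ y ∈ Λ, y ≠ r ∧ |y - r| < ε) :
    ∃ r₁ ∈ Λ, ∃ r₂ ∈ Λ, ∃ r₃ ∈ Λ, r₁ < r₂ ∧ r₂ < r₃ ∧
      Ψ.symm r₁ ≤ Ψ.symm r₂ ∧ Ψ.symm r₃ ≤ Ψ.symm r₂ := by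
  have hdich : (∀ ε : ℚ, 0 < ε → ∃ y ∈ Λ, r < y ∧ y < r + ε) ∨
      (∀ ε : ℚ, 0 < ε → ∃ y ∈ Λ, y < r ∧ r - ε < y) := by
    by_contra hcon
    push_neg at hcon
    obtain ⟨⟨ε₁, hε₁, h1⟩, ⟨ε₂, hε₂, h2⟩⟩ := hcon
    obtain ⟨y, hyΛ, hyne, hy⟩ := hlim (min ε₁ ε₂) (lt_min hε₁ hε₂)
    rw [abs_sub_lt_iff] at hy
    rcases lt_or_gt_of_ne hyne with hlt | hgt
    · linarith [hy.2, min_le_right ε₁ ε₂, h2 y hyΛ hlt]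
    · linarith [hy.1, min_le_left ε₁ ε₂, h1 y hyΛ hgt]
  rcases hdich with h | h
  · obtain ⟨r₃, hr₃Λ, hrr₃, _⟩ := h 1 one_pos
    obtain ⟨r₂, hr₂Λ, h1, h2, hN⟩ :=
      aux_right Ψ Λ r r₃ hrr₃ h (max (Ψ.symm r) (Ψ.symm r₃))
    exact ⟨r, hr, r₂, hr₂Λ, r₃, hr₃Λ, h1, h2,
      le_trans (le_max_left _ _) hN, le_trans (le_max_right _ _) hN⟩
  · obtain ⟨r₁, hr₁Λ, hr₁r, _⟩ := h 1 one_pos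
    obtain ⟨r₂, hr₂Λ, h1, h2, hN⟩ :=
      aux_left Ψ Λ r r₁ hr₁r h (max (Ψ.symm r) (Ψ.symm r₁))
    exact ⟨r₁, hr₁Λ, r₂, hr₂Λ, r, hr, h2, h1,
      le_trans (le_max_right _ _) hN, le_trans (le_max_left _ _) hN⟩
end

section
/- Let (Ψ_n) be an enumeration of ℚ with induced well-order ≼ (Ψ_i ≼ Ψ_j iff i ≤ j). Define χ on pairs {x₁, x₂} with x₁ < x₂ by χ = 0 if x₂ ≼ x₁ and χ = 1 if x₁ ≼ x₂. Then there is no infinite subset of ℚ, monochromatic for χ, that contains one of its limit points. -/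
/-- Sierpiński's coloring of pairs of rationals admits no infinite
monochromatic set containing one of its limit points. -/
theorem sierpinski_no_monochromatic_with_limit_point
    (Ψ : ℕ ≃ ℚ) (χ : Finset ℚ → ℕ)
    (hχ : ∀ x₁ x₂ : ℚ, x₁ < x₂ →
      χ {x₁, x₂} = if Ψ.symm x₂ ≤ Ψ.symm x₁ then 0 else 1) :
    ¬ ∃ Λ : Set ℚ, Λ.Infinite ∧
      (∃ i : ℕ, ∀ s : Finset ℚ, ↑s ⊆ Λ → s.card = 2 → χ s = i) ∧
      ∃ r ∈ Λ, ∀ ε : ℚ, 0 < ε → ∃ y ∈ Λ, y ≠ r ∧ |y - r| < ε := by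
  rintro ⟨Λ, hinf, ⟨i, hmono⟩, r, hrΛ, hlim⟩
  have key : ∀ x ∈ Λ, ∀ y ∈ Λ, x < y →
      (i = 0 ∧ Ψ.symm y < Ψ.symm x) ∨ (i = 1 ∧ Ψ.symm x < Ψ.symm y) := by
    intro x hx y hy hxy
    have hne : x ≠ y := ne_of_lt hxy
    have hcard : ({x, y} : Finset ℚ).card = 2 := by
      rw [Finset.card_insert_of_notMem (by simpa using hne), Finset.card_singleton]
    have hsub : ↑({x, y} : Finset ℚ) ⊆ Λ := by
      intro z hz
      simp only [Finset.coe_insert, Finset.coe_singleton, Set.mem_insert_iff,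
        Set.mem_singleton_iff] at hz
      rcases hz with h | h <;> subst h <;> assumption
    have h1 := hmono {x, y} hsub hcard
    have h2 := hχ x y hxy
    rw [h1] at h2
    by_cases hc : Ψ.symm y ≤ Ψ.symm x
    · left
      refine ⟨by simpa [hc] using h2, lt_of_le_of_ne hc ?_⟩
      intro h; exact hne (Ψ.symm.injective h).symm
    · right; exact ⟨by simpa [hc] using h2, lt_of_not_ge hc⟩
  choose g hgΛ hgne hglt using hlim
  let F : ℕ → {y : ℚ // y ∈ Λ ∧ y ≠ r} := fun n =>
    Nat.rec ⟨g 1 one_pos, hgΛ 1 one_pos, hgne 1 one_pos⟩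
      (fun _ p => ⟨g |p.1 - r| (abs_pos.mpr (sub_ne_zero.mpr p.2.2)),
        hgΛ _ _, hgne _ _⟩) n
  have hF : ∀ n, |(F (n + 1)).1 - r| < |(F n).1 - r| := fun n =>
    hglt _ (abs_pos.mpr (sub_ne_zero.mpr (F n).2.2))
  have hanti' : StrictAnti (fun n => |(F n).1 - r|) := strictAnti_nat_of_succ_lt hF
  have hanti : ∀ m n : ℕ, m < n → |(F n).1 - r| < |(F m).1 - r| :=
    fun m n h => hanti' h
  have hFinj : Function.Injective fun n => (F n).1 := by
    intro m n h
    by_contra hne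
    rcases Nat.lt_or_ge m n with hmn | hmn
    · have := hanti m n hmn
      simp only at h
      rw [h] at this; exact lt_irrefl _ this
    · have hmn' : n < m := by omega
      have := hanti n m hmn'
      simp only at h
      rw [h] at this; exact lt_irrefl _ this
  -- contradiction lemma (a): infinite index set on which Ψ.symm ∘ F is order-reversing
  have ha : ∀ T : Set ℕ, T.Infinite →
      (∀ m ∈ T, ∀ n ∈ T, m < n → Ψ.symm (F n).1 < Ψ.symm (F m).1) → False := by
    intro T hT hdec
    obtain ⟨n0, hn0⟩ := hT.nonempty
    set V := (fun n => (Ψ.symm (F n).1 : ℕ)) '' T with hVdef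
    have hV : V.Nonempty := ⟨_, ⟨n0, hn0, rfl⟩⟩
    obtain ⟨m, hmT, hm⟩ := Nat.sInf_mem hV
    obtain ⟨n, hnT, hmn⟩ := hT.exists_gt m
    have h1 := hdec m hmT n hnT hmn
    have h2 : (Ψ.symm (F n).1 : ℕ) ∈ V := ⟨n, hnT, rfl⟩
    have h3 := Nat.sInf_le h2
    simp only at hm h3
    omega
  -- contradiction lemma (b): infinite index set on which Ψ.symm ∘ F is bounded
  have hb : ∀ T : Set ℕ, T.Infinite → ∀ B : ℕ,
      (∀ n ∈ T, Ψ.symm (F n).1 < B) → False := by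
    intro T hT B hB
    have hsub : T ⊆ (fun n => (Ψ.symm (F n).1 : ℕ)) ⁻¹' (Set.Iio B) := fun n hn => hB n hn
    have hfin : ((fun n => (Ψ.symm (F n).1 : ℕ)) ⁻¹' (Set.Iio B)).Finite :=
      (Set.finite_Iio B).preimage ((Ψ.symm.injective.comp hFinj).injOn)
    exact hfin.not_infinite (hT.mono hsub)
  -- i is 0 or 1
  have hi : i = 0 ∨ i = 1 := by
    rcases lt_or_gt_of_ne (F 0).2.2 with h | h
    · rcases key (F 0).1 (F 0).2.1 r hrΛ h with ⟨h0, _⟩ | ⟨h1, _⟩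
      · exact Or.inl h0
      · exact Or.inr h1
    · rcases key r hrΛ (F 0).1 (F 0).2.1 h with ⟨h0, _⟩ | ⟨h1, _⟩
      · exact Or.inl h0
      · exact Or.inr h1
  -- one side of r is hit infinitely often
  set S : Set ℕ := {n | (F n).1 < r} with hSdef
  have hside : S.Infinite ∨ Sᶜ.Infinite := by
    by_contra hcon
    push_neg at hcon
    have : (S ∪ Sᶜ).Finite := hcon.1.union hcon.2
    rw [Set.union_compl_self] at this
    exact Set.infinite_univ this
  have hSlt : ∀ n ∈ S, (F n).1 < r := fun n hn => hn
  have hSgt : ∀ n ∈ Sᶜ, r < (F n).1 := by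
    intro n hn
    rcases lt_or_gt_of_ne (F n).2.2 with h | h
    · exact absurd h hn
    · exact h
  -- ordering of F values on each side
  have hbelow : ∀ m ∈ S, ∀ n ∈ S, m < n → (F m).1 < (F n).1 := by
    intro m hm n hn hmn
    have h1 := hanti m n hmn
    rw [abs_of_neg (sub_neg.mpr (hSlt m hm)), abs_of_neg (sub_neg.mpr (hSlt n hn))] at h1
    linarith
  have habove : ∀ m ∈ Sᶜ, ∀ n ∈ Sᶜ, m < n → (F n).1 < (F m).1 := by
    intro m hm n hn hmn
    have h1 := hanti m n hmn
    rw [abs_of_pos (sub_pos.mpr (hSgt m hm)), abs_of_pos (sub_pos.mpr (hSgt n hn))] at h1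
    linarith
  rcases hi with hi | hi
  · -- color 0 : Ψ.symm reverses order
    have key0 : ∀ x ∈ Λ, ∀ y ∈ Λ, x < y → Ψ.symm y < Ψ.symm x := by
      intro x hx y hy hxy
      rcases key x hx y hy hxy with ⟨_, h⟩ | ⟨h1, _⟩
      · exact h
      · omega
    rcases hside with hS | hS
    · exact ha S hS (fun m hm n hn hmn =>
        key0 (F m).1 (F m).2.1 (F n).1 (F n).2.1 (hbelow m hm n hn hmn))
    · exact hb Sᶜ hS (Ψ.symm r) (fun n hn =>
        key0 r hrΛ (F n).1 (F n).2.1 (hSgt n hn))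
  · -- color 1 : Ψ.symm preserves order
    have key1 : ∀ x ∈ Λ, ∀ y ∈ Λ, x < y → Ψ.symm x < Ψ.symm y := by
      intro x hx y hy hxy
      rcases key x hx y hy hxy with ⟨h0, _⟩ | ⟨_, h⟩
      · omega
      · exact h
    rcases hside with hS | hS
    · exact hb S hS (Ψ.symm r) (fun n hn =>
        key1 (F n).1 (F n).2.1 r hrΛ (hSlt n hn))
    · exact ha Sᶜ hS (fun m hm n hn hmn =>
        key1 (F n).1 (F n).2.1 (F m).1 (F m).2.1 (habove m hm n hn hmn))
end

section
/- Let (Ψ_n) be an enumeration of ℚ with induced well-order ≼. Define χ on 3-element subsets {x₁, x₂, x₃} with x₁ < x₂ < x₃ by χ = 0 if x₁ ≼ x₂ and x₃ ≼ x₂, and χ = 1 otherwise. Then there is no infinite subset Λ ⊆ ℚ containing one of its limit points such that all 3-element subsets of Λ are colored 1. -/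
/-- for the enumeration-order coloring of triples of rationals, no
infinite set containing one of its limit points has all triples colored 1. -/
theorem no_one_colored_set_with_limit_point
    (Ψ : ℕ ≃ ℚ) (χ : Finset ℚ → ℕ)
    (hχ : ∀ x₁ x₂ x₃ : ℚ, x₁ < x₂ → x₂ < x₃ →
      χ {x₁, x₂, x₃} = if Ψ.symm x₁ ≤ Ψ.symm x₂ ∧ Ψ.symm x₃ ≤ Ψ.symm x₂ then 0 else 1) :
    ¬ ∃ Λ : Set ℚ, Λ.Infinite ∧
      (∀ s : Finset ℚ, ↑s ⊆ Λ → s.card = 3 → χ s = 1) ∧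
      ∃ r ∈ Λ, ∀ ε : ℚ, 0 < ε → ∃ y ∈ Λ, y ≠ r ∧ |y - r| < ε := by
  rintro ⟨Λ, -, h1, r, hrΛ, hlim⟩
  have bad : ∀ x₁ x₂ x₃ : ℚ, x₁ ∈ Λ → x₂ ∈ Λ → x₃ ∈ Λ → x₁ < x₂ → x₂ < x₃ →
      Ψ.symm x₁ ≤ Ψ.symm x₂ → Ψ.symm x₃ ≤ Ψ.symm x₂ → False := by
    intro x₁ x₂ x₃ m₁ m₂ m₃ l12 l23 i1 i3
    have n12 : x₁ ≠ x₂ := ne_of_lt l12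
    have n23 : x₂ ≠ x₃ := ne_of_lt l23
    have n13 : x₁ ≠ x₃ := ne_of_lt (l12.trans l23)
    have hc := h1 {x₁, x₂, x₃}
      (by intro z hz; simp at hz; rcases hz with rfl | rfl | rfl <;> assumption)
      (by simp [Finset.card_insert_of_notMem, n12, n23, n13])
    rw [hχ x₁ x₂ x₃ l12 l23, if_pos ⟨i1, i3⟩] at hc
    exact absurd hc (by norm_num)
  have key : ∀ ε : ℚ, 0 < ε → ∀ N : ℕ, ∃ y ∈ Λ, y ≠ r ∧ |y - r| < ε ∧ N < Ψ.symm y := by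
    intro ε hε N
    set s : Finset ℚ :=
      insert ε (((Finset.range (N+1)).filter (fun k => Ψ k ≠ r)).image (fun k => |Ψ k - r|))
      with hs
    have hne : s.Nonempty := ⟨ε, Finset.mem_insert_self _ _⟩
    set δ := s.min' hne with hδ
    have hδpos : 0 < δ := by
      rw [hδ]
      apply (Finset.lt_min'_iff s hne).mpr
      intro y hy
      simp only [hs, Finset.mem_insert, Finset.mem_image, Finset.mem_filter] at hy
      rcases hy with rfl | ⟨k, ⟨-, hk'⟩, rfl⟩
      · exact hε
      · exact abs_pos.mpr (sub_ne_zero.mpr hk')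
    obtain ⟨y, hyΛ, hyr, hylt⟩ := hlim δ hδpos
    have hδε : δ ≤ ε := Finset.min'_le _ _ (Finset.mem_insert_self _ _)
    refine ⟨y, hyΛ, hyr, lt_of_lt_of_le hylt hδε, ?_⟩
    by_contra h
    push_neg at h
    have hmem : |y - r| ∈ s := by
      simp only [hs, Finset.mem_insert, Finset.mem_image, Finset.mem_filter]
      right
      refine ⟨Ψ.symm y, ⟨Finset.mem_range.mpr (Nat.lt_succ_of_le h), ?_⟩, by rw [Equiv.apply_symm_apply]⟩
      rw [Equiv.apply_symm_apply]; exact hyr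
    exact absurd (Finset.min'_le _ _ hmem) (not_le.mpr hylt)
  obtain ⟨a, haΛ, har, -⟩ := hlim 1 one_pos
  rcases lt_or_gt_of_ne har with hlt | hgt
  · -- a < r
    obtain ⟨y, hyΛ, hyr, hyd, hyN⟩ := key (r - a) (by linarith) (max (Ψ.symm a) (Ψ.symm r))
    have habs := abs_lt.mp hyd
    have hya : a < y := by linarith
    have iay : Ψ.symm a ≤ Ψ.symm y := le_of_lt (lt_of_le_of_lt (le_max_left _ _) hyN)
    have iry : Ψ.symm r ≤ Ψ.symm y := le_of_lt (lt_of_le_of_lt (le_max_right _ _) hyN)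
    rcases lt_or_gt_of_ne hyr with hc1 | hc2
    · exact bad a y r haΛ hyΛ hrΛ hya hc1 iay iry
    · obtain ⟨z, hzΛ, hzr, hzd, hzN⟩ := key (min (y - r) (r - a))
        (lt_min (by linarith) (by linarith)) (Ψ.symm y)
      have hz1 : min (y - r) (r - a) ≤ y - r := min_le_left _ _
      have hz2 : min (y - r) (r - a) ≤ r - a := min_le_right _ _
      have hzabs := abs_lt.mp hzd
      have iyz : Ψ.symm y ≤ Ψ.symm z := le_of_lt hzN
      have irz : Ψ.symm r ≤ Ψ.symm z := iry.trans iyz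
      have iaz : Ψ.symm a ≤ Ψ.symm z := iay.trans iyz
      rcases lt_or_gt_of_ne hzr with hd1 | hd2
      · exact bad a z r haΛ hzΛ hrΛ (by linarith) hd1 iaz irz
      · exact bad r z y hrΛ hzΛ hyΛ hd2 (by linarith) irz iyz
  · -- r < a
    obtain ⟨y, hyΛ, hyr, hyd, hyN⟩ := key (a - r) (by linarith) (max (Ψ.symm a) (Ψ.symm r))
    have habs := abs_lt.mp hyd
    have hya : y < a := by linarith
    have iay : Ψ.symm a ≤ Ψ.symm y := le_of_lt (lt_of_le_of_lt (le_max_left _ _) hyN)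
    have iry : Ψ.symm r ≤ Ψ.symm y := le_of_lt (lt_of_le_of_lt (le_max_right _ _) hyN)
    rcases lt_or_gt_of_ne hyr with hc1 | hc2
    · obtain ⟨z, hzΛ, hzr, hzd, hzN⟩ := key (min (r - y) (a - r))
        (lt_min (by linarith) (by linarith)) (Ψ.symm y)
      have hz1 : min (r - y) (a - r) ≤ r - y := min_le_left _ _
      have hz2 : min (r - y) (a - r) ≤ a - r := min_le_right _ _
      have hzabs := abs_lt.mp hzd
      have iyz : Ψ.symm y ≤ Ψ.symm z := le_of_lt hzN
      have irz : Ψ.symm r ≤ Ψ.symm z := iry.trans iyz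
      have iaz : Ψ.symm a ≤ Ψ.symm z := iay.trans iyz
      rcases lt_or_gt_of_ne hzr with hd1 | hd2
      · exact bad y z r hyΛ hzΛ hrΛ (by linarith) hd1 iyz irz
      · exact bad r z a hrΛ hzΛ haΛ hd2 (by linarith) irz iaz
    · exact bad r y a hrΛ hyΛ haΛ hc2 hya iry iay
end

section
/- Let (Ψ_n) be an enumeration of ℚ with induced well-order ≼. Define χ on 3-element subsets {x₁, x₂, x₃} with x₁ < x₂ < x₃ by χ = 0 if x₁ ≼ x₂ and x₃ ≼ x₂, and χ = 1 otherwise. Then there is no 4-element subset {r₁, r₂, r₃, r₄} ⊆ ℚ all of whose 3-element subsets are colored 0. -/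
/-- for the enumeration-order coloring of triples of rationals, no
4-element set has all its 3-element subsets colored 0. -/
theorem no_four_element_zero_colored
    (Ψ : ℕ ≃ ℚ) (χ : Finset ℚ → ℕ)
    (hχ : ∀ x₁ x₂ x₃ : ℚ, x₁ < x₂ → x₂ < x₃ →
      χ {x₁, x₂, x₃} = if Ψ.symm x₁ ≤ Ψ.symm x₂ ∧ Ψ.symm x₃ ≤ Ψ.symm x₂ then 0 else 1) :
    ¬ ∃ r₁ r₂ r₃ r₄ : ℚ, r₁ < r₂ ∧ r₂ < r₃ ∧ r₃ < r₄ ∧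
      (∀ s : Finset ℚ, s ⊆ {r₁, r₂, r₃, r₄} → s.card = 3 → χ s = 0) := by
  rintro ⟨r₁, r₂, r₃, r₄, h12, h23, h34, hall⟩
  have card1 : (({r₁, r₂, r₃} : Finset ℚ)).card = 3 := by
    rw [Finset.card_insert_of_notMem, Finset.card_insert_of_notMem,
      Finset.card_singleton]
    · simp [h23.ne]
    · simp [h12.ne, (h12.trans h23).ne]
  have card2 : (({r₂, r₃, r₄} : Finset ℚ)).card = 3 := by
    rw [Finset.card_insert_of_notMem, Finset.card_insert_of_notMem,
      Finset.card_singleton]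
    · simp [h34.ne]
    · simp [h23.ne, (h23.trans h34).ne]
  have sub1 : ({r₁, r₂, r₃} : Finset ℚ) ⊆ {r₁, r₂, r₃, r₄} := by
    intro x hx; simp at hx ⊢; tauto
  have sub2 : ({r₂, r₃, r₄} : Finset ℚ) ⊆ {r₁, r₂, r₃, r₄} := by
    intro x hx; simp at hx ⊢; tauto
  have h1 := hall _ sub1 card1
  have h2 := hall _ sub2 card2
  rw [hχ r₁ r₂ r₃ h12 h23] at h1
  rw [hχ r₂ r₃ r₄ h23 h34] at h2
  by_cases hc1 : Ψ.symm r₁ ≤ Ψ.symm r₂ ∧ Ψ.symm r₃ ≤ Ψ.symm r₂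
  swap; · simp [hc1] at h1
  by_cases hc2 : Ψ.symm r₂ ≤ Ψ.symm r₃ ∧ Ψ.symm r₄ ≤ Ψ.symm r₃
  swap; · simp [hc2] at h2
  have : Ψ.symm r₂ = Ψ.symm r₃ := le_antisymm hc2.1 hc1.2
  exact h23.ne (Ψ.symm.injective this)
end

section
/- Define χ on 3-element subsets {x₁, x₂, x₃} of ℝ with x₁ < x₂ < x₃ by χ = 0 if |x₁ - x₂| ≤ |x₂ - x₃| and χ = 1 otherwise. For every coloring of the 3-element subsets of ℝ there exists (by the main theorem) an infinite monochromatic set containing one of its limit points; show that for this particular χ, every infinite monochromatic set Λ containing a limit point r ∈ Λ satisfies: r is the unique limit point of Λ. -/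
/-- for the min-distance coloring of triples of reals, any infinite
monochromatic set containing a limit point r has r as its unique limit point. -/
theorem limit_point_unique_for_min_distance_coloring
    (χ : Finset ℝ → ℕ)
    (hχ : ∀ x₁ x₂ x₃ : ℝ, x₁ < x₂ → x₂ < x₃ →
      χ {x₁, x₂, x₃} = if |x₁ - x₂| ≤ |x₂ - x₃| then 0 else 1)
    (Λ : Set ℝ) (hinf : Λ.Infinite)
    (hmono : ∃ i : ℕ, ∀ s : Finset ℝ, ↑s ⊆ Λ → s.card = 3 → χ s = i)
    (r : ℝ) (hr : r ∈ Λ)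
    (hlim : ∀ ε : ℝ, 0 < ε → ∃ y ∈ Λ, y ≠ r ∧ |y - r| < ε) :
    ∀ l : ℝ, (∀ ε : ℝ, 0 < ε → ∃ y ∈ Λ, y ≠ l ∧ |y - l| < ε) → l = r := by
  obtain ⟨i, hi⟩ := hmono
  intro l hl
  by_contra hne
  set a := min l r with ha
  set b := max l r with hb
  have hab : a < b := min_lt_max.mpr hne
  have key : ∀ c : ℝ, (c = l ∨ c = r) →
      ∀ ε, 0 < ε → ∃ y ∈ Λ, y ≠ c ∧ |y - c| < ε := by
    rintro c (rfl | rfl)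
    · exact hl
    · exact hlim
  have hA : ∀ ε, 0 < ε → ∃ y ∈ Λ, y ≠ a ∧ |y - a| < ε := by
    rcases min_choice l r with h | h <;> rw [ha, h]
    · exact key l (Or.inl rfl)
    · exact key r (Or.inr rfl)
  have hB : ∀ ε, 0 < ε → ∃ y ∈ Λ, y ≠ b ∧ |y - b| < ε := by
    rcases max_choice l r with h | h <;> rw [hb, h]
    · exact key l (Or.inl rfl)
    · exact key r (Or.inr rfl)
  -- two distinct points of Λ within ε of a limit point
  have two : ∀ c : ℝ, (∀ ε, 0 < ε → ∃ y ∈ Λ, y ≠ c ∧ |y - c| < ε) →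
      ∀ ε, 0 < ε → ∃ u v, u ∈ Λ ∧ v ∈ Λ ∧ u < v ∧ |u - c| < ε ∧ |v - c| < ε := by
    intro c hc ε hε
    obtain ⟨y₁, hy₁Λ, hy₁ne, hy₁⟩ := hc ε hε
    have h2 : 0 < |y₁ - c| := abs_pos.mpr (sub_ne_zero.mpr hy₁ne)
    obtain ⟨y₂, hy₂Λ, hy₂ne, hy₂⟩ := hc _ h2
    have hne12 : y₂ ≠ y₁ := by
      intro h; rw [h] at hy₂; exact lt_irrefl _ hy₂
    have hy₂ε : |y₂ - c| < ε := hy₂.trans hy₁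
    rcases lt_or_gt_of_ne hne12 with h | h
    · exact ⟨y₂, y₁, hy₂Λ, hy₁Λ, h, hy₂ε, hy₁⟩
    · exact ⟨y₁, y₂, hy₁Λ, hy₂Λ, h, hy₁, hy₂ε⟩
  set d := b - a with hd
  have hdpos : 0 < d := sub_pos.mpr hab
  have hε : 0 < d / 4 := by linarith
  obtain ⟨u, v, huΛ, hvΛ, huv, hu, hv⟩ := two a hA (d / 4) hε
  obtain ⟨p, q, hpΛ, hqΛ, hpq, hp, hq⟩ := two b hB (d / 4) hε
  rw [abs_lt] at hu hv hp hq
  have hvp : v < p := by linarith [hu.2, hv.2, hp.1]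
  have hup : u < p := huv.trans hvp
  -- triple {u, p, q} : u near a, p < q near b, so |u-p| > |p-q| → color 1
  have card1 : ({u, p, q} : Finset ℝ).card = 3 := by
    rw [Finset.card_insert_of_notMem, Finset.card_insert_of_notMem,
      Finset.card_singleton]
    · simp [hpq.ne]
    · simp [hup.ne, (hup.trans hpq).ne]
  have sub1 : ↑({u, p, q} : Finset ℝ) ⊆ Λ := by
    intro x hx
    simp only [Finset.coe_insert, Set.mem_insert_iff, Finset.coe_singleton,
      Set.mem_singleton_iff] at hx
    rcases hx with rfl | rfl | rfl <;> assumption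
  have e1 : χ {u, p, q} = i := hi _ sub1 card1
  have e1' : χ {u, p, q} = 1 := by
    rw [hχ u p q hup hpq, if_neg]
    rw [abs_sub_comm u p, abs_of_pos (sub_pos.mpr hup),
      abs_sub_comm p q, abs_of_pos (sub_pos.mpr hpq)]
    push_neg
    linarith [hu.2, hp.1, hp.2, hq.2]
  -- triple {u, v, p} : u < v near a, p near b, so |u-v| < |v-p| → color 0
  have card2 : ({u, v, p} : Finset ℝ).card = 3 := by
    rw [Finset.card_insert_of_notMem, Finset.card_insert_of_notMem,
      Finset.card_singleton]
    · simp [hvp.ne]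
    · simp [huv.ne, hup.ne]
  have sub2 : ↑({u, v, p} : Finset ℝ) ⊆ Λ := by
    intro x hx
    simp only [Finset.coe_insert, Set.mem_insert_iff, Finset.coe_singleton,
      Set.mem_singleton_iff] at hx
    rcases hx with rfl | rfl | rfl <;> assumption
  have e2 : χ {u, v, p} = i := hi _ sub2 card2
  have e2' : χ {u, v, p} = 0 := by
    rw [hχ u v p huv hvp, if_pos]
    rw [abs_sub_comm u v, abs_of_pos (sub_pos.mpr huv),
      abs_sub_comm v p, abs_of_pos (sub_pos.mpr hvp)]
    linarith [hu.1, hu.2, hv.1, hv.2, hp.1]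
  rw [e1'] at e1
  rw [e2'] at e2
  omega
end

section
/- Every countable dense-in-itself metric space X admits a coloring χ of its 2-element subsets with 2 colors such that no infinite monochromatic subset of X contains one of its limit points. (In particular this holds for X = ℚ.) -/
set_option maxHeartbeats 1000000

/- Auxiliary lemmas for Sierpiński-style coloring construction. -/

section Aux

private lemma sumf {f : ℕ → ℝ} (hf : ∀ n, f n = 0 ∨ f n = (1/3:ℝ)^n) : Summable f := by
  apply Summable.of_nonneg_of_le (fun n => ?_) (fun n => ?_)
    (summable_geometric_of_lt_one (by norm_num) (by norm_num : (1/3:ℝ) < 1))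
  · rcases hf n with h | h <;> rw [h] <;> positivity
  · rcases hf n with h | h <;> rw [h]
    positivity

private lemma tail_nonneg {f : ℕ → ℝ} (hf : ∀ n, f n = 0 ∨ f n = (1/3:ℝ)^n) (N : ℕ) :
    0 ≤ ∑' n, f (n + N) :=
  tsum_nonneg (fun n => by rcases hf (n + N) with h | h <;> rw [h] <;> positivity)

private lemma tail_le {f : ℕ → ℝ} (hf : ∀ n, f n = 0 ∨ f n = (1/3:ℝ)^n) (N : ℕ) :
    ∑' n, f (n + N) ≤ (3/2) * (1/3:ℝ)^N := by
  have hgeo : Summable (fun n : ℕ => (1/3:ℝ)^(n + N)) := by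
    simp_rw [pow_add]
    exact (summable_geometric_of_lt_one (by norm_num) (by norm_num)).mul_right _
  have h1 : ∑' n : ℕ, ((1/3:ℝ)^(n + N)) = (3/2) * (1/3)^N := by
    simp_rw [pow_add]
    rw [tsum_mul_right, tsum_geometric_of_lt_one (by norm_num) (by norm_num)]
    norm_num
  rw [← h1]
  refine Summable.tsum_le_tsum (fun n => ?_) ((summable_nat_add_iff N).2 (sumf hf)) hgeo
  rcases hf (n + N) with h | h <;> rw [h]
  positivity

private lemma abs_diff_le {f g : ℕ → ℝ} (hf : ∀ n, f n = 0 ∨ f n = (1/3:ℝ)^n)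
    (hg : ∀ n, g n = 0 ∨ g n = (1/3:ℝ)^n) (N : ℕ) (h : ∀ n < N, f n = g n) :
    |∑' n, f n - ∑' n, g n| ≤ (3/2) * (1/3:ℝ)^N := by
  have Hf := Summable.sum_add_tsum_nat_add N (sumf hf)
  have Hg := Summable.sum_add_tsum_nat_add N (sumf hg)
  have hs : ∑ i ∈ Finset.range N, f i = ∑ i ∈ Finset.range N, g i :=
    Finset.sum_congr rfl (fun i hi => h i (Finset.mem_range.mp hi))
  have h1 := tail_nonneg hf N; have h2 := tail_le hf N
  have h3 := tail_nonneg hg N; have h4 := tail_le hg N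
  rw [abs_le]
  constructor <;> linarith

private lemma tsum_ne {f g : ℕ → ℝ} (hf : ∀ n, f n = 0 ∨ f n = (1/3:ℝ)^n)
    (hg : ∀ n, g n = 0 ∨ g n = (1/3:ℝ)^n) (N : ℕ) (h : ∀ n < N, f n = g n)
    (hfN : f N = (1/3:ℝ)^N) (hgN : g N = 0) :
    ∑' n, f n ≠ ∑' n, g n := by
  have Hf := Summable.sum_add_tsum_nat_add (N+1) (sumf hf)
  have Hg := Summable.sum_add_tsum_nat_add (N+1) (sumf hg)
  have hs : ∑ i ∈ Finset.range (N+1), f i = ∑ i ∈ Finset.range (N+1), g i + (1/3:ℝ)^N := by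
    rw [Finset.sum_range_succ, Finset.sum_range_succ, hfN, hgN,
      Finset.sum_congr rfl (fun i hi => h i (Finset.mem_range.mp hi))]
    ring
  have h1 := tail_nonneg hf (N+1); have h2 := tail_le hf (N+1)
  have h3 := tail_nonneg hg (N+1); have h4 := tail_le hg (N+1)
  have hp : (0:ℝ) < (1/3)^N := by positivity
  have h5 : (3/2) * (1/3:ℝ)^(N+1) = (1/2) * (1/3)^N := by rw [pow_succ]; ring
  intro hEq
  rw [hEq] at Hf
  linarith

/-- The key metric lemma: if a set `Λ` is ordered the same way by an injection
into ℕ and by a real-valued function continuous at `r ∈ Λ`, then `Λ` is bounded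
away from `r`. -/
private lemma no_limit {X : Type*} [MetricSpace X] (ι : X → ℕ) (hι : Function.Injective ι)
    (ψ : X → ℝ) (Λ : Set X) (r : X) (hr : r ∈ Λ)
    (hcont : ∀ ε > (0:ℝ), ∃ δ > (0:ℝ), ∀ y : X, dist y r < δ → |ψ y - ψ r| < ε)
    (hmono : ∀ a ∈ Λ, ∀ b ∈ Λ, ι a < ι b → ψ a < ψ b) :
    ∃ δ > (0:ℝ), ∀ y ∈ Λ, y ≠ r → δ ≤ dist y r := by
  classical
  -- the points of Λ below r (in enumeration order) form a finite set
  have hbelow : {y : X | y ∈ Λ ∧ ι y < ι r}.Finite := by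
    have hsub : {y : X | y ∈ Λ ∧ ι y < ι r} ⊆ ι ⁻¹' (Set.Iio (ι r)) := by
      intro y hy; exact hy.2
    exact ((Set.finite_Iio (ι r)).preimage hι.injOn).subset hsub
  obtain ⟨δ1, hδ1pos, hδ1⟩ :
      ∃ δ1 > (0:ℝ), ∀ y ∈ Λ, ι y < ι r → δ1 ≤ dist y r := by
    set F := hbelow.toFinset with hF
    by_cases hne : F.Nonempty
    · refine ⟨F.inf' hne (fun y => dist y r), ?_, ?_⟩
      · rw [gt_iff_lt, Finset.lt_inf'_iff]
        intro y hy
        rw [hF, Set.Finite.mem_toFinset] at hy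
        have : y ≠ r := by
          intro h; rw [h] at hy; exact lt_irrefl _ hy.2
        exact dist_pos.mpr this
      · intro y hy hlt
        exact Finset.inf'_le _ (by rw [hF, Set.Finite.mem_toFinset]; exact ⟨hy, hlt⟩)
    · refine ⟨1, one_pos, fun y hy hlt => absurd ?_ hne⟩
      exact ⟨y, by rw [hF, Set.Finite.mem_toFinset]; exact ⟨hy, hlt⟩⟩
  -- points of Λ above r
  obtain ⟨δ2, hδ2pos, hδ2⟩ :
      ∃ δ2 > (0:ℝ), ∀ y ∈ Λ, ι r < ι y → δ2 ≤ dist y r := by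
    by_cases habove : ({y : X | y ∈ Λ ∧ ι r < ι y}).Nonempty
    · -- pick the element of minimal index above r
      obtain ⟨m, hm, hmmin⟩ := Nat.lt_wfRel.wf.has_min (ι '' {y : X | y ∈ Λ ∧ ι r < ι y})
        (habove.image ι)
      obtain ⟨y0, hy0, rfl⟩ := hm
      have hψ : ψ r < ψ y0 := hmono r hr y0 hy0.1 hy0.2
      obtain ⟨δ2, hδ2pos, hδ2⟩ := hcont (ψ y0 - ψ r) (by linarith)
      refine ⟨δ2, hδ2pos, fun y hy hlt => ?_⟩
      by_contra hcon
      push_neg at hcon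
      have h1 : |ψ y - ψ r| < ψ y0 - ψ r := hδ2 y hcon
      have h2 : ψ y < ψ y0 := by
        rcases abs_lt.mp h1 with ⟨_, h⟩; linarith
      have h3 : ι y0 ≤ ι y := not_lt.mp (hmmin (ι y) ⟨y, ⟨hy, hlt⟩, rfl⟩)
      rcases h3.lt_or_eq with h4 | h4
      · exact absurd (hmono y0 hy0.1 y hy h4) (by linarith)
      · exact absurd (hι h4) (by intro h; rw [h] at h2; exact lt_irrefl _ h2)
    · refine ⟨1, one_pos, fun y hy hlt => absurd ⟨y, hy, hlt⟩ habove⟩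
  refine ⟨min δ1 δ2, lt_min hδ1pos hδ2pos, fun y hy hne => ?_⟩
  rcases (hι.ne_iff.mpr hne).lt_or_gt with h | h
  · exact le_trans (min_le_left _ _) (hδ1 y hy h)
  · exact le_trans (min_le_right _ _) (hδ2 y hy h)

/-- Symmetry of the agreement condition for distinct values. -/
private lemma agree_symm {ia ib : ℕ} {pa pb : ℝ} (hi : ia ≠ ib) (hp : pa ≠ pb) :
    (ib < ia ↔ pb < pa) → (ia < ib ↔ pa < pb) := by
  intro h
  constructor
  · intro h1
    rcases hp.lt_or_gt with h2 | h2
    · exact h2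
    · exact absurd (h.mpr h2) (by omega)
  · intro h1
    rcases hi.lt_or_gt with h2 | h2
    · exact h2
    · exact absurd (h.mp h2) (by intro h3; linarith)

end Aux

/-- every countable dense-in-itself metric space admits a 2-coloring
of its pairs with no infinite monochromatic set containing one of its limit points. -/
theorem countable_space_bad_coloring
    (X : Type*) [MetricSpace X] [Countable X]
    (hdense : ∀ x : X, ∀ ε : ℝ, 0 < ε → ∃ y : X, y ≠ x ∧ dist y x < ε) :
    ∃ χ : Finset X → Fin 2,
      ¬ ∃ Λ : Set X, Λ.Infinite ∧
        (∃ i : Fin 2, ∀ s : Finset X, ↑s ⊆ Λ → s.card = 2 → χ s = i) ∧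
        ∃ r ∈ Λ, ∀ ε : ℝ, 0 < ε → ∃ y ∈ Λ, y ≠ r ∧ dist y r < ε := by
  classical
  rcases isEmpty_or_nonempty X with hX | hX
  · exact ⟨fun _ => 0, fun ⟨Λ, hinf, _⟩ => hinf (Set.toFinite Λ)⟩
  -- enumeration of X
  obtain ⟨ι, hι⟩ := Countable.exists_injective_nat X
  -- enumeration of pairs
  obtain ⟨u, hu⟩ := exists_surjective_nat (X × X)
  -- for each pair of distinct points, pick a good radius
  have hspec : ∀ a b : X, a ≠ b → ∃ t : ℝ, 0 < t ∧ t < dist a b ∧ ∀ z : X, dist a z ≠ t := by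
    intro a b hab
    have hd : 0 < dist a b := dist_pos.mpr hab
    have hS : (Set.range (fun z : X => dist a z)).Countable := Set.countable_range _
    have : ¬ (Set.Ioo (0:ℝ) (dist a b) ⊆ Set.range (fun z : X => dist a z)) := by
      intro hsub
      have hc : (Set.Ioo (0:ℝ) (dist a b)).Countable := hS.mono hsub
      have := hc.le_aleph0
      rw [Cardinal.mk_Ioo_real hd] at this
      exact absurd this (by simp [Cardinal.aleph0_lt_continuum.not_ge])
    obtain ⟨t, htIoo, htS⟩ := Set.not_subset.mp this
    exact ⟨t, htIoo.1, htIoo.2, fun z hz => htS ⟨z, hz⟩⟩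
  -- good radii for the pair enumeration
  have hT : ∀ n : ℕ, ∃ t : ℝ, ((u n).1 ≠ (u n).2 →
      0 < t ∧ t < dist (u n).1 (u n).2 ∧ ∀ z : X, dist (u n).1 z ≠ t) ∧
      ((u n).1 = (u n).2 → t = -1) := by
    intro n
    by_cases h : (u n).1 = (u n).2
    · exact ⟨-1, fun hc => absurd h hc, fun _ => rfl⟩
    · obtain ⟨t, ht⟩ := hspec _ _ h
      exact ⟨t, fun _ => ht, fun hc => absurd hc h⟩
  choose T hT1 hT2 using hT
  -- the digit functions and the embedding φ
  set D : ℕ → X → ℝ := fun n x => if dist (u n).1 x < T n then (1/3:ℝ)^n else 0 with hD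
  have hDd : ∀ x : X, ∀ n : ℕ, D n x = 0 ∨ D n x = (1/3:ℝ)^n := by
    intro x n
    rw [hD]
    dsimp only
    split <;> simp
  set φ : X → ℝ := fun x => ∑' n, D n x with hφ
  -- φ is injective
  have hφinj : Function.Injective φ := by
    intro x y hxy
    by_contra hne
    obtain ⟨n, hn⟩ := hu (x, y)
    have hx1 : (u n).1 = x := by rw [hn]
    have hx2 : (u n).2 = y := by rw [hn]
    have hne' : (u n).1 ≠ (u n).2 := by rw [hx1, hx2]; exact hne
    obtain ⟨htpos, htlt, _⟩ := hT1 n hne'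
    have hDx : D n x = (1/3:ℝ)^n := by
      rw [hD]; dsimp only
      rw [if_pos]
      rw [hx1, dist_self]; exact htpos
    have hDy : D n y = 0 := by
      rw [hD]; dsimp only
      rw [if_neg]
      rw [hx1]
      rw [hx1, hx2] at htlt
      exact not_lt.mpr htlt.le
    have hPn : ∃ m : ℕ, D m x ≠ D m y := by
      refine ⟨n, ?_⟩
      rw [hDx, hDy]
      positivity
    set N := Nat.find hPn with hNdef
    have hagree : ∀ m < N, D m x = D m y := fun m hm => by
      by_contra hc
      exact absurd (Nat.find_le hc) (not_le.mpr hm)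
    have hdiff : D N x ≠ D N y := Nat.find_spec hPn
    have hpow : ((1/3:ℝ)^N) ≠ 0 := by positivity
    rcases hDd x N with hx0 | hx0 <;> rcases hDd y N with hy0 | hy0
    · exact hdiff (by rw [hx0, hy0])
    · exact (tsum_ne (hDd y) (hDd x) N (fun m hm => (hagree m hm).symm) hy0 hx0) hxy.symm
    · exact (tsum_ne (hDd x) (hDd y) N hagree hx0 hy0) hxy
    · exact hdiff (by rw [hx0, hy0])
  -- digits are "continuous": near any point the first N digits are constant
  have hdig : ∀ (r : X) (N : ℕ), ∃ δ > (0:ℝ), ∀ y : X, dist y r < δ →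
      ∀ n < N, D n y = D n r := by
    intro r N
    induction N with
    | zero => exact ⟨1, one_pos, fun y _ n hn => absurd hn (Nat.not_lt_zero n)⟩
    | succ N ih =>
      obtain ⟨δ, hδpos, hδ⟩ := ih
      obtain ⟨δ', hδ'pos, hδ'⟩ :
          ∃ δ' > (0:ℝ), ∀ y : X, dist y r < δ' → D N y = D N r := by
        by_cases h : (u N).1 = (u N).2
        · have ht := hT2 N h
          refine ⟨1, one_pos, fun y _ => ?_⟩
          rw [hD]; dsimp only
          rw [if_neg, if_neg]
          · rw [ht]; intro hc; linarith [dist_nonneg (x := (u N).1) (y := r)]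
          · rw [ht]; intro hc; linarith [dist_nonneg (x := (u N).1) (y := y)]
        · obtain ⟨htpos, htlt, htne⟩ := hT1 N h
          rcases (htne r).lt_or_gt with hlt | hlt
          · refine ⟨T N - dist (u N).1 r, by linarith, fun y hy => ?_⟩
            rw [hD]; dsimp only
            rw [if_pos hlt, if_pos]
            calc dist (u N).1 y ≤ dist (u N).1 r + dist r y := dist_triangle _ _ _
              _ = dist (u N).1 r + dist y r := by rw [dist_comm r y]
              _ < T N := by linarith
          · refine ⟨dist (u N).1 r - T N, by linarith, fun y hy => ?_⟩
            rw [hD]; dsimp only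
            rw [if_neg (not_lt.mpr hlt.le), if_neg]
            intro hc
            have := dist_triangle (u N).1 y r
            linarith
      refine ⟨min δ δ', lt_min hδpos hδ'pos, fun y hy n hn => ?_⟩
      rcases Nat.lt_succ_iff_lt_or_eq.mp hn with h | h
      · exact hδ y (lt_of_lt_of_le hy (min_le_left _ _)) n h
      · rw [h]; exact hδ' y (lt_of_lt_of_le hy (min_le_right _ _))
  -- φ is continuous at every point
  have hφcont : ∀ (r : X), ∀ ε > (0:ℝ), ∃ δ > (0:ℝ), ∀ y : X, dist y r < δ →
      |φ y - φ r| < ε := by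
    intro r ε hε
    obtain ⟨N, hN⟩ := exists_pow_lt_of_lt_one (x := (2/3) * ε) (y := (1/3:ℝ))
      (by linarith) (by norm_num)
    obtain ⟨δ, hδpos, hδ⟩ := hdig r N
    refine ⟨δ, hδpos, fun y hy => ?_⟩
    have := abs_diff_le (hDd y) (hDd r) N (hδ y hy)
    rw [hφ]
    dsimp only
    linarith
  -- the coloring
  refine ⟨fun s => if (∃ a ∈ s, ∃ b ∈ s, a ≠ b ∧ (ι a < ι b ↔ φ a < φ b)) then 0 else 1, ?_⟩
  rintro ⟨Λ, hinf, ⟨i, hmono⟩, r, hrΛ, hlim⟩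
  -- from monochromaticity extract the order relation on Λ
  have hkey : ∀ a ∈ Λ, ∀ b ∈ Λ, a ≠ b →
      (if (∃ a' ∈ ({a, b} : Finset X), ∃ b' ∈ ({a, b} : Finset X),
        a' ≠ b' ∧ (ι a' < ι b' ↔ φ a' < φ b')) then (0 : Fin 2) else 1) = i := by
    intro a ha b hb hab
    apply hmono
    · intro z hz
      simp only [Finset.coe_insert, Finset.coe_singleton, Set.mem_insert_iff,
        Set.mem_singleton_iff] at hz
      rcases hz with rfl | rfl
      · exact ha
      · exact hb
    · exact Finset.card_pair hab
  -- reduce the exists-condition to the agreement condition on a, b themselves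
  have hcond : ∀ a b : X, a ≠ b →
      ((∃ a' ∈ ({a, b} : Finset X), ∃ b' ∈ ({a, b} : Finset X),
        a' ≠ b' ∧ (ι a' < ι b' ↔ φ a' < φ b')) ↔ (ι a < ι b ↔ φ a < φ b)) := by
    intro a b hab
    constructor
    · rintro ⟨a', ha', b', hb', hne', hagr⟩
      simp only [Finset.mem_insert, Finset.mem_singleton] at ha' hb'
      rcases ha' with rfl | rfl <;> rcases hb' with rfl | rfl
      · exact absurd rfl hne'
      · exact hagr
      · exact agree_symm (hι.ne_iff.mpr hab) (hφinj.ne_iff.mpr hab) hagr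
      · exact absurd rfl hne'
    · intro hagr
      exact ⟨a, Finset.mem_insert_self _ _, b,
        Finset.mem_insert_of_mem (Finset.mem_singleton_self _), hab, hagr⟩
  -- agreement on Λ is equivalent to having color 0
  have hagree0 : ∀ a ∈ Λ, ∀ b ∈ Λ, a ≠ b → ((ι a < ι b ↔ φ a < φ b) ↔ i = 0) := by
    intro a ha b hb hne
    have h0 := hkey a ha b hb hne
    constructor
    · intro hagr
      rw [if_pos ((hcond a b hne).mpr hagr)] at h0
      exact h0.symm
    · intro hi
      by_contra hc
      rw [if_neg (fun hx => hc ((hcond a b hne).mp hx)), hi] at h0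
      exact absurd h0 (by decide)
  -- the main contradiction machine
  have main : ∀ ψ : X → ℝ,
      (∀ ε > (0:ℝ), ∃ δ > (0:ℝ), ∀ y : X, dist y r < δ → |ψ y - ψ r| < ε) →
      (∀ a ∈ Λ, ∀ b ∈ Λ, ι a < ι b → ψ a < ψ b) → False := by
    intro ψ hcont hmono'
    obtain ⟨δ, hδpos, hδ⟩ := no_limit ι hι ψ Λ r hrΛ hcont hmono'
    obtain ⟨y, hyΛ, hyne, hylt⟩ := hlim δ hδpos
    exact absurd (hδ y hyΛ hyne) (not_le.mpr hylt)
  by_cases hi : i = 0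
  · -- color 0: enumeration order agrees with φ-order on Λ
    apply main φ (hφcont r)
    intro a ha b hb hab
    have hne : a ≠ b := fun h => by rw [h] at hab; exact lt_irrefl _ hab
    exact ((hagree0 a ha b hb hne).mpr hi).mp hab
  · -- color 1: enumeration order agrees with (-φ)-order on Λ
    apply main (fun x => -φ x) ?_ ?_
    · intro ε hε
      obtain ⟨δ, hδpos, hδ⟩ := hφcont r ε hε
      refine ⟨δ, hδpos, fun y hy => ?_⟩
      show |(-φ y) - (-φ r)| < ε
      have h3 : (-φ y) - (-φ r) = φ r - φ y := by ring
      rw [h3, abs_sub_comm]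
      exact hδ y hy
    · intro a ha b hb hab
      have hne : a ≠ b := fun h => by rw [h] at hab; exact lt_irrefl _ hab
      have hnagr : ¬ (ι a < ι b ↔ φ a < φ b) :=
        fun h => hi ((hagree0 a ha b hb hne).mp h)
      have hnlt : ¬ (φ a < φ b) := fun h => hnagr ⟨fun _ => h, fun _ => hab⟩
      have hneφ : φ a ≠ φ b := hφinj.ne_iff.mpr hne
      have hlt : φ b < φ a := (not_lt.mp hnlt).lt_of_ne hneφ.symm
      show -φ a < -φ b
      linarith
end
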